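/- Let d ≥ 1 and let ρ be a d²×d² complex matrix of trace 1. Then for every d×d unitary matrix U, tr[ρ (I ⊗ U) |φ₊⟩⟨φ₊| (I ⊗ U†)] = 1/d² + (1/d²) Σ_{(i,j)≠(0,0)} tr[ρ (A_{ij} ⊗ U A_{−i,j} U†)], where the sum runs over all (i,j) ∈ Z_d × Z_d with (i,j) ≠ (0,0). -/

import Mathlib

open Matrix Kronecker Finset

/-- ω = exp(2πi/d), a fixed primitive d-th root of unity. -/
noncomputable def omg (d : ℕ) : ℂ := Complex.exp (2 * Real.pi * Complex.I / d)

/-- Principal basis matrix A_{ij} = Σ_{m ∈ Z_d} ω^{im} E_{m, m+j},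
i.e. (A_{ij})_{m, m+j} = ω^{im}, indices mod d. -/
lemma omg_pow_d (d : ℕ) [NeZero d] : omg d ^ d = 1 := by
  rw [omg, ← Complex.exp_nat_mul, mul_comm, div_mul_cancel₀ _ (by exact_mod_cast NeZero.ne d)]
  exact Complex.exp_two_pi_mul_I

lemma omg_val_add (d : ℕ) [NeZero d] (x y : ZMod d) :
    omg d ^ (x + y).val = omg d ^ x.val * omg d ^ y.val := by
  rw [ZMod.val_add, ← pow_eq_pow_mod _ (omg_pow_d d), pow_add]

lemma omg_ne_one (d : ℕ) [NeZero d] {c : ZMod d} (hc : c ≠ 0) : omg d ^ c.val ≠ 1 := by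
  have hprim := Complex.isPrimitiveRoot_exp d (NeZero.ne d)
  intro h
  exact hprim.pow_ne_one_of_pos_of_lt
    (Nat.pos_of_ne_zero (fun h0 => hc (by rwa [← ZMod.val_eq_zero]))).ne' (ZMod.val_lt c) h

lemma sum_omg (d : ℕ) [NeZero d] (c : ZMod d) :
    ∑ i : ZMod d, omg d ^ (i * c).val = if c = 0 then (d : ℂ) else 0 := by
  split_ifs with h
  · subst h; simp [ZMod.val_zero]
  · set S := ∑ i : ZMod d, omg d ^ (i * c).val with hS
    have key : S * omg d ^ c.val = S := by
      rw [hS, Finset.sum_mul]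
      rw [← Fintype.sum_equiv (Equiv.addRight 1) _ (fun i => omg d ^ (i * c).val)]
      intro i
      simp only [Equiv.coe_addRight]
      rw [add_mul, one_mul, omg_val_add]
    have : S * (omg d ^ c.val - 1) = 0 := by ring_nf; rw [mul_comm] at key; linear_combination key
    rcases mul_eq_zero.1 this with h1 | h2
    · exact h1
    · exact absurd (by linear_combination h2) (omg_ne_one d h)

noncomputable def A (d : ℕ) [NeZero d] (i j : ZMod d) : Matrix (ZMod d) (ZMod d) ℂ :=
  Matrix.of fun m n => if n = m + j then omg d ^ (i * m).val else 0

/-- Frobenius norm ‖M‖_F = √(tr(M†M)). -/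
noncomputable def frob {n : Type*} [Fintype n] (M : Matrix n n ℂ) : ℝ :=
  Real.sqrt (Mᴴ * M).trace.re

/-- The maximally entangled state |φ₊⟩ = (1/√d) Σ_i |ii⟩. -/
noncomputable def phiPlus (d : ℕ) [NeZero d] : ZMod d × ZMod d → ℂ :=
  fun p => if p.1 = p.2 then ((1 / Real.sqrt d : ℝ) : ℂ) else 0

/-- The projector |φ₊⟩⟨φ₊| onto the maximally entangled state. -/
noncomputable def phiProj (d : ℕ) [NeZero d] :
    Matrix (ZMod d × ZMod d) (ZMod d × ZMod d) ℂ :=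
  Matrix.vecMulVec (phiPlus d) (star (phiPlus d))

lemma phiProj_eq (d : ℕ) [NeZero d] :
    phiProj d = (1 / (d : ℂ) ^ 2) •
      ∑ ij : ZMod d × ZMod d, A d ij.1 ij.2 ⊗ₖ A d (-ij.1) ij.2 := by
  have hd0 : (d : ℂ) ≠ 0 := by exact_mod_cast NeZero.ne d
  ext ⟨m, m'⟩ ⟨n, n'⟩
  simp only [Matrix.smul_apply, Matrix.sum_apply, kroneckerMap_apply, A, Matrix.of_apply,
    Fintype.sum_prod_type]
  have hj : ∀ i : ZMod d,
      (∑ j : ZMod d, (if n = m + j then omg d ^ (i * m).val else 0) *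
        (if n' = m' + j then omg d ^ ((-i) * m').val else 0))
      = if n' = m' + (n - m) then omg d ^ (i * m).val * omg d ^ ((-i) * m').val else 0 := by
    intro i
    rw [Finset.sum_eq_single (n - m)]
    · rw [if_pos (by ring)]
      split_ifs <;> simp
    · intro j _ hj
      rw [if_neg, zero_mul]
      intro h; exact hj (by rw [h]; ring)
    · simp
  simp only [hj]
  have hpow : ∀ i : ZMod d, omg d ^ (i * m).val * omg d ^ ((-i) * m').val
      = omg d ^ (i * (m - m')).val := by
    intro i; rw [← omg_val_add]; congr 1; ring
  simp only [hpow]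
  have hL : phiProj d (m, m') (n, n')
      = if m = m' ∧ n = n' then ((1 / (d : ℝ) : ℝ) : ℂ) else 0 := by
    simp only [phiProj, Matrix.vecMulVec_apply, Pi.star_apply, phiPlus]
    have hs : Real.sqrt d * Real.sqrt d = d :=
      Real.mul_self_sqrt (Nat.cast_nonneg d)
    split_ifs with h1 h2 h3 h3 <;>
      simp_all [← mul_inv, ← Complex.ofReal_mul, div_mul_div_comm, hs]
  rw [hL]
  by_cases hP : n' = m' + (n - m)
  · simp only [if_pos hP]
    rw [sum_omg d (m - m')]
    by_cases hm : m = m'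
    · have hn : n' = n := by rw [hP, ← hm]; ring
      rw [if_pos ⟨hm, hn.symm⟩, if_pos (by rw [hm, sub_self])]
      rw [smul_eq_mul]
      push_cast
      field_simp
    · rw [if_neg (fun h => hm h.1), if_neg (sub_ne_zero.2 hm), smul_zero]
  · simp only [if_neg hP, Finset.sum_const_zero, smul_zero]
    rw [if_neg]
    rintro ⟨rfl, rfl⟩
    exact hP (by ring)

lemma A_zero_zero (d : ℕ) [NeZero d] : A d 0 0 = 1 := by
  ext m n
  simp [A, Matrix.one_apply, eq_comm]

/-- For any d²×d² matrix ρ of trace 1 and any unitary U,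
tr[ρ (I⊗U) |φ₊⟩⟨φ₊| (I⊗U†)] = 1/d² + (1/d²) Σ_{(i,j)≠(0,0)} tr[ρ (A_{ij} ⊗ U A_{−i,j} U†)]. -/
theorem trace_fidelity_expansion (d : ℕ) (hd : 1 ≤ d) [NeZero d]
    (ρ : Matrix (ZMod d × ZMod d) (ZMod d × ZMod d) ℂ) (htr : ρ.trace = 1)
    (U : Matrix (ZMod d) (ZMod d) ℂ) (hU : U ∈ Matrix.unitaryGroup (ZMod d) ℂ) :
    (ρ * (((1 : Matrix (ZMod d) (ZMod d) ℂ) ⊗ₖ U) * phiProj d *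
        ((1 : Matrix (ZMod d) (ZMod d) ℂ) ⊗ₖ Uᴴ))).trace
      = 1 / (d : ℂ) ^ 2 + (1 / (d : ℂ) ^ 2) *
          ∑ ij ∈ Finset.univ.filter (fun ij : ZMod d × ZMod d => ij ≠ (0, 0)),
            (ρ * (A d ij.1 ij.2 ⊗ₖ (U * A d (-ij.1) ij.2 * Uᴴ))).trace := by
  have hUU : U * Uᴴ = 1 := by
    have := (Matrix.mem_unitaryGroup_iff).1 hU
    rwa [Matrix.star_eq_conjTranspose] at this
  have hconj : ((1 : Matrix (ZMod d) (ZMod d) ℂ) ⊗ₖ U) * phiProj d *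
        ((1 : Matrix (ZMod d) (ZMod d) ℂ) ⊗ₖ Uᴴ)
      = (1 / (d : ℂ) ^ 2) •
          ∑ ij : ZMod d × ZMod d, A d ij.1 ij.2 ⊗ₖ (U * A d (-ij.1) ij.2 * Uᴴ) := by
    rw [phiProj_eq, Matrix.mul_smul, Matrix.smul_mul]
    congr 1
    rw [Finset.mul_sum, Finset.sum_mul]
    refine Finset.sum_congr rfl fun ij _ => ?_
    rw [← Matrix.mul_kronecker_mul, ← Matrix.mul_kronecker_mul, Matrix.one_mul, Matrix.mul_one]
  rw [hconj, Matrix.mul_smul, Matrix.trace_smul, Finset.mul_sum, Matrix.trace_sum, smul_eq_mul,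
    Finset.mul_sum]
  rw [← Finset.add_sum_erase _ _ (Finset.mem_univ ((0, 0) : ZMod d × ZMod d))]
  have h00 : (ρ * (A d 0 0 ⊗ₖ (U * A d (-0) 0 * Uᴴ))).trace = 1 := by
    rw [neg_zero, A_zero_zero, Matrix.mul_one, hUU, Matrix.one_kronecker_one, Matrix.mul_one, htr]
  rw [show ((0,0) : ZMod d × ZMod d).1 = 0 from rfl]
  rw [h00]
  rw [Finset.filter_ne', ← Finset.mul_sum, mul_one]
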